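/- arXiv:2104.09813 — 2 statements merged into one kernel-verified Lean document; each statement's English description precedes it below -/
import Mathlib

section
/- Generalized Bregman convexity inequality: for g = (1-α)g₁ + αg₂ with α ∈ [0,1], defining x⁺, x₁⁺, x₂⁺ by ∇h(x⁺) = ∇h(x) - g, ∇h(x₁⁺) = ∇h(x) - g₁, ∇h(x₂⁺) = ∇h(x) - g₂, we have D_h(x, x⁺) ≤ (1-α) D_h(x, x₁⁺) + α D_h(x, x₂⁺). -/
open MeasureTheory Set Finset
noncomputable section

abbrev E (d : ℕ) := EuclideanSpace ℝ (Fin d)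

/-- Bregman divergence `D_f(x,y) = f x - f y - ⟪∇f(y), x - y⟫`. -/
def breg {d : ℕ} (f : E d → ℝ) (f' : E d → E d) (x y : E d) : ℝ :=
  f x - f y - inner ℝ (f' y) (x - y)

lemma grad_ineq {d : ℕ} {s : Set (E d)} {f : E d → ℝ} {g : E d}
    (hf : ConvexOn ℝ s f) {z w : E d} (hz : z ∈ s) (hw : w ∈ s)
    (hg : HasGradientAt f g z) : f z + inner ℝ g (w - z) ≤ f w := by
  rcases eq_or_ne w z with rfl | hne
  · simp
  · set L : ℝ → E d := fun t => z + t • (w - z) with hL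
    have hφc : ConvexOn ℝ (Icc (0:ℝ) 1) (fun t => f (L t)) := by
      have := hf.comp_affineMap (AffineMap.lineMap z w : ℝ →ᵃ[ℝ] E d)
      have hsub : Icc (0:ℝ) 1 ⊆ (AffineMap.lineMap z w : ℝ →ᵃ[ℝ] E d) ⁻¹' s := by
        intro t ht
        have : (AffineMap.lineMap z w : ℝ →ᵃ[ℝ] E d) t ∈ segment ℝ z w := by
          rw [segment_eq_image_lineMap]; exact ⟨t, ht, rfl⟩
        exact hf.1.segment_subset hz hw this
      have hEq : (fun t => f (L t)) = f ∘ (AffineMap.lineMap z w : ℝ →ᵃ[ℝ] E d) := by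
        funext t
        simp only [hL, Function.comp_apply, AffineMap.lineMap_apply_module]
        congr 1
        module
      rw [hEq]
      exact this.subset hsub (convex_Icc 0 1)
    have hcurve : HasDerivAt L (w - z) 0 :=
      ((hasDerivAt_id (0:ℝ)).smul_const (w - z)).const_add z |>.congr_deriv (by simp)
    have hL0 : L 0 = z := by simp [hL]
    have hφ' : HasDerivAt (fun t => f (L t)) (inner ℝ g (w - z) : ℝ) 0 := by
      have hfd : HasFDerivAt f (InnerProductSpace.toDual ℝ (E d) g : E d →L[ℝ] ℝ) (L 0) := by
        rw [hL0]; exact hg.hasFDerivAt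
      exact (by simpa using hfd.comp_hasDerivAt 0 hcurve : HasDerivAt (f ∘ L) (inner ℝ g (w - z)) 0)
    have := hφc.le_slope_of_hasDerivAt (by simp) (by simp) one_pos hφ'
    rw [slope_def_field] at this
    have hL1 : L 1 = w := by simp [hL]
    rw [hL0, hL1] at this
    simp only [sub_zero, div_one] at this
    linarith

/-- Generalized Bregman convexity inequality: for
`g = (1-α)g₁ + αg₂` with `α ∈ [0,1]`, defining `x⁺, x₁⁺, x₂⁺` by
`∇h(x⁺) = ∇h(x) - g`, `∇h(x₁⁺) = ∇h(x) - g₁`, `∇h(x₂⁺) = ∇h(x) - g₂`, we have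
`D_h(x, x⁺) ≤ (1-α) D_h(x, x₁⁺) + α D_h(x, x₂⁺)`. -/
theorem bregman_young_general {d : ℕ} (C : Set (E d)) (hC : IsClosed C) (hCconv : Convex ℝ C)
    (h : E d → ℝ) (h' : E d → E d)
    (hh2 : ContDiffOn ℝ 2 h (interior C))
    (hhsc : StrictConvexOn ℝ (interior C) h)
    (hh' : ∀ x ∈ interior C, HasGradientAt h (h' x) x)
    (hblanket : ∀ y : E d, ∃! z, z ∈ interior C ∧
      IsMinOn (fun u => h u - (inner ℝ u y : ℝ)) C z)
    (α : ℝ) (hα : α ∈ Set.Icc (0 : ℝ) 1)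
    (g1 g2 : E d) (x xp x1 x2 : E d)
    (hx : x ∈ interior C) (hxp : xp ∈ interior C)
    (hx1 : x1 ∈ interior C) (hx2 : x2 ∈ interior C)
    (hup : h' xp = h' x - ((1 - α) • g1 + α • g2))
    (hu1 : h' x1 = h' x - g1) (hu2 : h' x2 = h' x - g2) :
    breg h h' x xp ≤ (1 - α) * breg h h' x x1 + α * breg h h' x x2 := by
  have key1 : h x1 + inner ℝ (h' x1) (xp - x1) ≤ h xp :=
    grad_ineq hhsc.convexOn hx1 hxp (hh' x1 hx1)
  have key2 : h x2 + inner ℝ (h' x2) (xp - x2) ≤ h xp :=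
    grad_ineq hhsc.convexOn hx2 hxp (hh' x2 hx2)
  have h1 : (0:ℝ) ≤ 1 - α := by linarith [hα.2]
  have h0 : (0:ℝ) ≤ α := hα.1
  simp only [breg, hup, hu1, hu2] at key1 key2 ⊢
  simp only [inner_sub_left, inner_add_left, real_inner_smul_left, inner_sub_right]
    at key1 key2 ⊢
  nlinarith [mul_le_mul_of_nonneg_left key1 h1, mul_le_mul_of_nonneg_left key2 h0]
end
end

section
/- SAGA one-step Lyapunov contraction for quadratic h: suppose ∇²h is a constant positive definite matrix, each fᵢ is L-relatively smooth w.r.t. h, f = (1/n)Σfᵢ is μ-relatively strongly convex with μ > 0, ∇f(x*) = 0, and the Bregman-SAGA update is run with constant step η = 1/(8L). Then the potential ψ_t = (1/η) D_h(x*, x_t) + (n/2) H_t satisfies E[ψ_{t+1}] ≤ (1 - min(μ/(8L), 1/(2n))) ψ_t, where H_t = (1/n)Σᵢ D_{f_i}(φᵢᵗ, x*). -/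
open Finset
noncomputable section

lemma grad_ineq_s18 {d : ℕ} (f : E d → ℝ) (p : E d) (x y : E d)
    (hconv : ConvexOn ℝ Set.univ f) (hgrad : HasGradientAt f p y) :
    f y + inner ℝ p (x - y) ≤ f x := by
  set c : ℝ → E d := fun t => y + t • (x - y) with hc
  have hcomp : ConvexOn ℝ Set.univ (f ∘ c) := by
    have : c = fun t => (AffineMap.lineMap y x : ℝ →ᵃ[ℝ] E d) t := by
      funext t; simp [hc, AffineMap.lineMap_apply]; module
    rw [this]
    simpa using hconv.comp_affineMap (AffineMap.lineMap y x)
  have hderiv : HasDerivAt (f ∘ c) (inner ℝ p (x - y)) 0 := by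
    have hcd : HasDerivAt c (x - y) 0 := by
      have : HasDerivAt (fun t : ℝ => t • (x - y)) ((1:ℝ) • (x - y)) 0 :=
        (hasDerivAt_id (0:ℝ)).smul_const (x - y)
      simpa [hc] using this.const_add y
    have hg0 : HasFDerivAt f (InnerProductSpace.toDual ℝ (E d) p) (c 0) := by
      simpa [hc] using hgrad.hasFDerivAt
    simpa using hg0.comp_hasDerivAt (0:ℝ) hcd
  have := hcomp.le_slope_of_hasDerivAt (Set.mem_univ (0:ℝ)) (Set.mem_univ (1:ℝ))
    zero_lt_one hderiv
  have h1 : f (c 1) = f x := by simp [hc]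
  have h0 : f (c 0) = f y := by simp [hc]
  rw [slope_def_field] at this
  simp only [Function.comp_apply] at this
  rw [h1, h0, sub_zero, div_one] at this
  linarith

lemma breg_nonneg {d : ℕ} (f : E d → ℝ) (f' : E d → E d) (x y : E d)
    (hconv : ConvexOn ℝ Set.univ f) (hgrad : HasGradientAt f (f' y) y) :
    0 ≤ breg f f' x y := by
  have := grad_ineq_s18 f (f' y) x y hconv hgrad
  simp only [breg]; linarith

lemma coco {d : ℕ} (Q : E d →L[ℝ] E d) (R : E d → E d) (hQR : ∀ v, Q (R v) = v)
    (f : E d → ℝ) (f' : E d → E d) (L : ℝ) (hL : 0 < L)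
    (hconv : ConvexOn ℝ Set.univ f) (hgrad : ∀ x, HasGradientAt f (f' x) x)
    (hsmooth : ∀ x y, breg f f' x y ≤ L * ((1/2) * (inner ℝ (Q (x - y)) (x - y) : ℝ)))
    (z w : E d) :
    (inner ℝ (f' z - f' w) (R (f' z - f' w)) : ℝ) ≤ 2 * L * breg f f' z w := by
  set v : E d := f' z - f' w with hv
  set z' : E d := z - L⁻¹ • R v with hz'
  have h1 : f w + inner ℝ (f' w) (z' - w) ≤ f z' := grad_ineq_s18 f (f' w) z' w hconv (hgrad w)
  have h2 : breg f f' z' z ≤ L * ((1/2) * (inner ℝ (Q (z' - z)) (z' - z) : ℝ)) := hsmooth z' z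
  have hzz : z' - z = -(L⁻¹ • R v) := by rw [hz']; abel
  have hq : (inner ℝ (Q (z' - z)) (z' - z) : ℝ) = L⁻¹ * L⁻¹ * inner ℝ v (R v) := by
    rw [hzz]
    simp only [map_neg, map_smul, inner_neg_neg, real_inner_smul_left, real_inner_smul_right, hQR]
    ring
  have hzw : z' - w = (z - w) - L⁻¹ • R v := by rw [hz']; abel
  have hiw : (inner ℝ (f' w) (z' - w) : ℝ) = inner ℝ (f' w) (z - w) - L⁻¹ * inner ℝ (f' w) (R v) := by
    rw [hzw, inner_sub_right, real_inner_smul_right]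
  have hiz : (inner ℝ (f' z) (z' - z) : ℝ) = -(L⁻¹ * inner ℝ (f' z) (R v)) := by
    rw [hzz, inner_neg_right, real_inner_smul_right]
  have hvv : (inner ℝ (f' z) (R v) : ℝ) - inner ℝ (f' w) (R v) = inner ℝ v (R v) := by
    rw [hv, inner_sub_left]
  simp only [breg] at h2 ⊢
  rw [hq, hiz] at h2
  rw [hiw] at h1
  have hRHS : L * (1/2 * (L⁻¹ * L⁻¹ * (inner ℝ v (R v) : ℝ))) = (1/2) * L⁻¹ * inner ℝ v (R v) := by
    field_simp
  rw [hRHS] at h2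
  have hvv3 : L⁻¹ * (inner ℝ (f' z) (R v) : ℝ) - L⁻¹ * (inner ℝ (f' w) (R v) : ℝ)
      = L⁻¹ * (inner ℝ v (R v) : ℝ) := by rw [← mul_sub, hvv]
  have hstep : (1/2) * L⁻¹ * (inner ℝ v (R v) : ℝ) ≤ f z - f w - inner ℝ (f' w) (z - w) := by
    linarith [h1, h2, hvv3]
  have hmul := mul_le_mul_of_nonneg_left hstep (by positivity : (0:ℝ) ≤ 2 * L)
  have hl : 2 * L * ((1/2) * L⁻¹ * (inner ℝ v (R v) : ℝ)) = inner ℝ v (R v) := by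
    field_simp
  rw [hl] at hmul
  linarith


set_option maxHeartbeats 2000000 in
/-- **SAGA one-step Lyapunov contraction for quadratic `h`.**
Suppose `h(x) = (1/2)⟪Qx, x⟫` with `Q` a constant symmetric positive definite
Hessian (so `∇h = Q`), each `fᵢ` is convex and `L`-relatively smooth w.r.t. `h`,
`f = (1/n)Σfᵢ` is `μ`-relatively strongly convex with `μ > 0`, `∇f(x*) = 0`,
and Bregman-SAGA is run with step `η = 1/(8L)`: with
`gᵢ = ∇f_i(x_t) - ∇f_i(φᵢᵗ) + (1/n)Σⱼ∇f_j(φⱼᵗ)` and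
`Q x_{t+1}(i) = Q x_t - η gᵢ`, `φ_i^{t+1} = x_t`, other table entries unchanged.
Then the potential `ψ_t = (1/η) D_h(x*, x_t) + (n/2) H_t`, where
`H_t = (1/n)Σᵢ D_{f_i}(φᵢᵗ, x*)`, contracts in expectation:
`E[ψ_{t+1}] ≤ (1 - min(μ/(8L), 1/(2n))) ψ_t`. -/
theorem saga_one_step_quadratic {d n : ℕ} (hn : 0 < n)
    (Q : E d →L[ℝ] E d)
    (hQsym : ∀ u v : E d, (inner ℝ (Q u) v : ℝ) = inner ℝ u (Q v))
    (hQpos : ∀ u : E d, u ≠ 0 → 0 < (inner ℝ (Q u) u : ℝ))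
    (h : E d → ℝ) (h' : E d → E d)
    (hhdef : ∀ x, h x = (1 / 2) * (inner ℝ (Q x) x : ℝ))
    (hh'def : ∀ x, h' x = Q x)
    (fs : Fin n → E d → ℝ) (fs' : Fin n → E d → E d)
    (f : E d → ℝ) (f' : E d → E d)
    (hfdef : ∀ x, f x = (1 / (n : ℝ)) * ∑ i, fs i x)
    (hf'def : ∀ x, f' x = (1 / (n : ℝ)) • ∑ i, fs' i x)
    (L μ : ℝ) (hL : 0 < L) (hμ : 0 < μ)
    (hfsconv : ∀ i, ConvexOn ℝ Set.univ (fs i))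
    (hfsgrad : ∀ i x, HasGradientAt (fs i) (fs' i x) x)
    (hrelsmooth : ∀ i x y, breg (fs i) (fs' i) x y ≤ L * breg h h' x y)
    (hrelsc : ∀ x y, μ * breg h h' x y ≤ breg f f' x y)
    (xstar xt : E d) (φ : Fin n → E d)
    (hcrit : f' xstar = 0)
    (η : ℝ) (hηdef : η = 1 / (8 * L))
    (g : Fin n → E d)
    (hgdef : ∀ i, g i = fs' i xt - fs' i (φ i) + (1 / (n : ℝ)) • ∑ j, fs' j (φ j))
    (xnext : Fin n → E d)
    (hupdate : ∀ i, Q (xnext i) = Q xt - η • g i) :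
    (1 / (n : ℝ)) * ∑ i : Fin n,
        ((1 / η) * breg h h' xstar (xnext i)
          + ((n : ℝ) / 2) * ((1 / (n : ℝ)) * ∑ j : Fin n,
              breg (fs j) (fs' j) (if j = i then xt else φ j) xstar))
      ≤ (1 - min (μ / (8 * L)) (1 / (2 * (n : ℝ))))
          * ((1 / η) * breg h h' xstar xt
            + ((n : ℝ) / 2) * ((1 / (n : ℝ)) * ∑ j : Fin n,
                breg (fs j) (fs' j) (φ j) xstar)) := by
  have hnR : (0:ℝ) < n := Nat.cast_pos.mpr hn
  have hηpos : 0 < η := by rw [hηdef]; positivity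
  have hηne : η ≠ 0 := ne_of_gt hηpos
  -- inverse of Q
  have hker : ∀ u : E d, Q u = 0 → u = 0 := by
    intro u hu
    by_contra hne
    have := hQpos u hne
    rw [hu] at this; simp at this
  have hinj : Function.Injective Q := by
    intro p q hpq
    have h0 : Q (p - q) = 0 := by rw [map_sub, hpq, sub_self]
    have := hker _ h0; rwa [sub_eq_zero] at this
  have hsurj : Function.Surjective Q := by
    exact (LinearMap.injective_iff_surjective (f := (Q : E d →ₗ[ℝ] E d))).mp hinj
  obtain ⟨R, hQR⟩ : ∃ R : E d → E d, ∀ v, Q (R v) = v :=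
    ⟨fun v => (hsurj v).choose, fun v => (hsurj v).choose_spec⟩
  have hRadd : ∀ u v, R (u + v) = R u + R v := fun u v => hinj (by rw [hQR, map_add, hQR, hQR])
  have hRsmul : ∀ (c : ℝ) (v), R (c • v) = c • R v := fun c v => hinj (by rw [hQR, map_smul, hQR])
  have hRsub : ∀ u v, R (u - v) = R u - R v := fun u v => hinj (by rw [hQR, map_sub, hQR, hQR])
  have hNsym : ∀ u v : E d, (inner ℝ u (R v) : ℝ) = inner ℝ v (R u) := by
    intro u v
    calc (inner ℝ u (R v) : ℝ) = inner ℝ (Q (R u)) (R v) := by rw [hQR]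
      _ = inner ℝ (R u) (Q (R v)) := hQsym _ _
      _ = inner ℝ (R u) v := by rw [hQR]
      _ = inner ℝ v (R u) := real_inner_comm _ _
  have hNnonneg : ∀ v : E d, 0 ≤ (inner ℝ v (R v) : ℝ) := by
    intro v
    rcases eq_or_ne (R v) 0 with hz | hz
    · simp [hz]
    · have := hQpos (R v) hz; rw [hQR] at this; linarith
  -- quadratic formula for breg h
  have hbregh : ∀ p q : E d, breg h h' p q = (1/2) * (inner ℝ (Q (p - q)) (p - q) : ℝ) := by
    intro p q
    have e1 : (inner ℝ (Q p) q : ℝ) = inner ℝ (Q q) p := by rw [hQsym]; exact (real_inner_comm _ _).symm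
    simp only [breg, hhdef, hh'def, map_sub, inner_sub_left, inner_sub_right]
    linarith [e1]
  have hbregh_nonneg : ∀ p q : E d, 0 ≤ breg h h' p q := by
    intro p q
    rw [hbregh]
    rcases eq_or_ne (p - q) 0 with hc | hc
    · simp [hc]
    · have := hQpos _ hc; linarith
  -- smoothness in quadratic form & cocoercivity
  have hsmoothQ : ∀ i (x y : E d), breg (fs i) (fs' i) x y
      ≤ L * ((1/2) * (inner ℝ (Q (x - y)) (x - y) : ℝ)) := by
    intro i x y; rw [← hbregh]; exact hrelsmooth i x y
  have hcoco : ∀ i (z w : E d),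
      (inner ℝ (fs' i z - fs' i w) (R (fs' i z - fs' i w)) : ℝ)
        ≤ 2 * L * breg (fs i) (fs' i) z w :=
    fun i z w => coco Q R hQR (fs i) (fs' i) L hL (hfsconv i) (hfsgrad i) (hsmoothQ i) z w
  have hbfs_nn : ∀ i (x y : E d), 0 ≤ breg (fs i) (fs' i) x y :=
    fun i x y => breg_nonneg _ _ _ _ (hfsconv i) (hfsgrad i y)
  -- sum of gradients at optimum vanishes
  have hsumstar : ∑ j, fs' j xstar = 0 := by
    have h0 := hcrit
    rw [hf'def] at h0
    have hne : (1/(n:ℝ)) ≠ 0 := by positivity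
    exact (smul_eq_zero.mp h0).resolve_left hne
  -- decomposition
  set a : Fin n → E d := fun i => fs' i xt - fs' i xstar with ha
  set b : Fin n → E d := fun i => fs' i (φ i) - fs' i xstar with hb
  set m : E d := (1/(n:ℝ)) • ∑ j, b j with hm
  have hmz : m = (1/(n:ℝ)) • ∑ j, fs' j (φ j) := by
    rw [hm]
    congr 1
    simp [hb, Finset.sum_sub_distrib, hsumstar]
  have hgd : ∀ i, g i = a i - (b i - m) := by
    intro i
    rw [hgdef, hmz]
    simp only [ha, hb]
    abel
  -- three point identity
  have hx : ∀ i, xnext i = xt - η • R (g i) := by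
    intro i
    apply hinj
    rw [hupdate i, map_sub, map_smul, hQR]
  have h3 : ∀ i, (1/η) * breg h h' xstar (xnext i)
      = (1/η) * breg h h' xstar xt + inner ℝ (g i) (xstar - xt)
        + (η/2) * inner ℝ (g i) (R (g i)) := by
    intro i
    have hd : xstar - xnext i = (xstar - xt) + η • R (g i) := by rw [hx i]; abel
    rw [hbregh, hbregh, hd]
    have e2 : (inner ℝ (Q (xstar - xt)) (R (g i)) : ℝ) = inner ℝ (g i) (xstar - xt) := by
      rw [hQsym, hQR, real_inner_comm]
    simp only [map_add, map_smul, inner_add_left, inner_add_right, real_inner_smul_left,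
      real_inner_smul_right, hQR, e2]
    field_simp
    ring
  -- mean of g
  have hsumg : ∑ i, g i = ∑ i, fs' i xt := by
    rw [Finset.sum_congr rfl (fun i _ => hgdef i)]
    rw [Finset.sum_add_distrib, Finset.sum_sub_distrib, Finset.sum_const, card_univ,
      Fintype.card_fin]
    have : (n : ℕ) • ((1/(n:ℝ)) • ∑ j, fs' j (φ j)) = ∑ j, fs' j (φ j) := by
      rw [← Nat.cast_smul_eq_nsmul ℝ, smul_smul]
      rw [show (n:ℝ) * (1/(n:ℝ)) = 1 by field_simp]
      rw [one_smul]
    rw [this]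
    abel
  have hEg2 : (1/(n:ℝ)) * ∑ i, (inner ℝ (g i) (xstar - xt) : ℝ)
      = inner ℝ (f' xt) (xstar - xt) := by
    rw [hf'def, real_inner_smul_left]
    congr 1
    rw [← hsumg, sum_inner]
  -- breg of f as average
  have hbregf : ∀ p q : E d, breg f f' p q = (1/(n:ℝ)) * ∑ i, breg (fs i) (fs' i) p q := by
    intro p q
    simp only [breg, hfdef, hf'def, real_inner_smul_left, sum_inner]
    rw [Finset.sum_sub_distrib, Finset.sum_sub_distrib]
    ring
  have hfxt : (inner ℝ (f' xt) (xstar - xt) : ℝ)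
      = -(breg f f' xt xstar) - breg f f' xstar xt := by
    simp only [breg, hcrit, inner_zero_left]
    ring
  -- subadditivity of the dual quadratic form
  have hsub : ∀ u v : E d, (inner ℝ (u - v) (R (u - v)) : ℝ)
      ≤ 2 * inner ℝ u (R u) + 2 * inner ℝ v (R v) := by
    intro u v
    have e1 : (inner ℝ (u + v) (R (u + v)) : ℝ)
        = inner ℝ u (R u) + 2 * inner ℝ u (R v) + inner ℝ v (R v) := by
      rw [hRadd, inner_add_left, inner_add_right, inner_add_right]
      linarith [hNsym v u]
    have e2 : (inner ℝ (u - v) (R (u - v)) : ℝ)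
        = inner ℝ u (R u) - 2 * inner ℝ u (R v) + inner ℝ v (R v) := by
      rw [hRsub, inner_sub_left, inner_sub_right, inner_sub_right]
      linarith [hNsym v u]
    linarith [hNnonneg (u + v)]
  -- variance reduction
  have hvar : ∑ i, (inner ℝ (b i - m) (R (b i - m)) : ℝ) ≤ ∑ i, (inner ℝ (b i) (R (b i)) : ℝ) := by
    have hexp : ∀ i, (inner ℝ (b i - m) (R (b i - m)) : ℝ)
        = inner ℝ (b i) (R (b i)) - 2 * inner ℝ (b i) (R m) + inner ℝ m (R m) := by
      intro i
      rw [hRsub, inner_sub_left, inner_sub_right, inner_sub_right]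
      linarith [hNsym m (b i)]
    rw [Finset.sum_congr rfl (fun i _ => hexp i)]
    rw [Finset.sum_add_distrib, Finset.sum_sub_distrib, Finset.sum_const, card_univ,
      Fintype.card_fin, nsmul_eq_mul]
    have hsb : ∑ i, (inner ℝ (b i) (R m) : ℝ) = (n:ℝ) * inner ℝ m (R m) := by
      rw [← sum_inner]
      have hbm : ∑ i, b i = (n:ℝ) • m := by
        rw [hm, smul_smul, show (n:ℝ) * (1/(n:ℝ)) = 1 by field_simp, one_smul]
      rw [hbm, real_inner_smul_left]
    rw [← Finset.mul_sum, hsb]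
    linarith [mul_nonneg hnR.le (hNnonneg m)]
  -- notation for key scalars
  set CA : ℝ := breg h h' xstar xt with hCA
  set CD : ℝ := ∑ i, breg (fs i) (fs' i) xt xstar with hCD
  set CH : ℝ := ∑ j, breg (fs j) (fs' j) (φ j) xstar with hCH
  clear_value CA CD CH
  have hCA_nn : 0 ≤ CA := by rw [hCA]; exact hbregh_nonneg _ _
  have hCD_nn : 0 ≤ CD := by rw [hCD]; exact Finset.sum_nonneg fun i _ => hbfs_nn i _ _
  have hCH_nn : 0 ≤ CH := by rw [hCH]; exact Finset.sum_nonneg fun i _ => hbfs_nn i _ _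
  -- the updated table sum
  have hHnext : ∀ i, ∑ j, breg (fs j) (fs' j) (if j = i then xt else φ j) xstar
      = CH - breg (fs i) (fs' i) (φ i) xstar + breg (fs i) (fs' i) xt xstar := by
    intro i
    rw [Finset.sum_eq_sum_sdiff_singleton_add (Finset.mem_univ i)]
    have hL1 : ∑ j ∈ Finset.univ \ {i}, breg (fs j) (fs' j) (if j = i then xt else φ j) xstar
        = ∑ j ∈ Finset.univ \ {i}, breg (fs j) (fs' j) (φ j) xstar := by
      refine Finset.sum_congr rfl fun j hj => ?_
      rw [if_neg]
      simpa using (Finset.mem_sdiff.mp hj).2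
    have hL2 : CH = (∑ j ∈ Finset.univ \ {i}, breg (fs j) (fs' j) (φ j) xstar)
        + breg (fs i) (fs' i) (φ i) xstar := by
      rw [hCH]; exact Finset.sum_eq_sum_sdiff_singleton_add (Finset.mem_univ i) _
    rw [hL1, if_pos rfl]
    linarith
  -- bound on the variance term
  have hSG : ∑ i, (inner ℝ (g i) (R (g i)) : ℝ) ≤ 4 * L * (CD + CH) := by
    have step1 : ∑ i, (inner ℝ (g i) (R (g i)) : ℝ)
        ≤ ∑ i, (2 * inner ℝ (a i) (R (a i)) + 2 * inner ℝ (b i - m) (R (b i - m)) : ℝ) := by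
      refine Finset.sum_le_sum fun i _ => ?_
      rw [hgd i]
      exact hsub (a i) (b i - m)
    have step2 : ∑ i, (inner ℝ (a i) (R (a i)) : ℝ) ≤ 2 * L * CD := by
      rw [hCD, Finset.mul_sum]
      exact Finset.sum_le_sum fun i _ => hcoco i xt xstar
    have step3 : ∑ i, (inner ℝ (b i) (R (b i)) : ℝ) ≤ 2 * L * CH := by
      rw [hCH, Finset.mul_sum]
      exact Finset.sum_le_sum fun i _ => hcoco i (φ i) xstar
    rw [Finset.sum_add_distrib, ← Finset.mul_sum, ← Finset.mul_sum] at step1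
    linarith
  -- bound the first part of the potential
  have hpart1 : (1/(n:ℝ)) * ∑ i, (1/η) * breg h h' xstar (xnext i)
      ≤ (1/η)*CA - μ*CA - (1/(n:ℝ))*CD + (1/(4*(n:ℝ)))*(CD + CH) := by
    rw [Finset.sum_congr rfl (fun i _ => h3 i)]
    rw [Finset.sum_add_distrib, Finset.sum_add_distrib, Finset.sum_const, card_univ,
      Fintype.card_fin, nsmul_eq_mul]
    have e0 : (1/(n:ℝ)) * ((n:ℝ) * ((1/η) * CA)) = (1/η) * CA := by field_simp
    have e1 : (1/(n:ℝ)) * ∑ i, (inner ℝ (g i) (xstar - xt) : ℝ) ≤ -((1/(n:ℝ))*CD) - μ*CA := by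
      rw [hEg2, hfxt]
      have r1 : breg f f' xt xstar = (1/(n:ℝ)) * CD := by rw [hCD]; exact hbregf xt xstar
      have r2 : μ * CA ≤ breg f f' xstar xt := by rw [hCA]; exact hrelsc xstar xt
      linarith
    have e2 : ∑ i, (η/2) * (inner ℝ (g i) (R (g i)) : ℝ)
        ≤ (η/2) * (4 * L * (CD + CH)) := by
      rw [← Finset.mul_sum]
      exact mul_le_mul_of_nonneg_left hSG (by positivity)
    have e3 : (η/2) * (4 * L * (CD + CH)) = (1/4) * (CD + CH) := by
      rw [hηdef]; field_simp; ring
    have e4 : (1/(n:ℝ)) * ((1/4) * (CD + CH)) = (1/(4*(n:ℝ))) * (CD + CH) := by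
      field_simp
    have hsplit : (1/(n:ℝ)) * ((n:ℝ) * ((1/η) * CA) + ∑ i, (inner ℝ (g i) (xstar - xt) : ℝ)
          + ∑ i, (η/2) * (inner ℝ (g i) (R (g i)) : ℝ))
        = (1/(n:ℝ)) * ((n:ℝ) * ((1/η) * CA)) + (1/(n:ℝ)) * ∑ i, (inner ℝ (g i) (xstar - xt) : ℝ)
          + (1/(n:ℝ)) * ∑ i, (η/2) * (inner ℝ (g i) (R (g i)) : ℝ) := by ring
    rw [hsplit, e0]
    have e5 : (1/(n:ℝ)) * ∑ i, (η/2) * (inner ℝ (g i) (R (g i)) : ℝ)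
        ≤ (1/(4*(n:ℝ))) * (CD + CH) := by
      rw [← e4, ← e3]
      exact mul_le_mul_of_nonneg_left (le_trans e2 (le_of_eq rfl)) (by positivity)
    linarith
  have hnne : (n:ℝ) ≠ 0 := ne_of_gt hnR
  -- second part of the potential
  have hpart2 : (1/(n:ℝ)) * ∑ i, ((n:ℝ)/2) * ((1/(n:ℝ)) * ∑ j,
        breg (fs j) (fs' j) (if j = i then xt else φ j) xstar)
      = (1/2)*CH - (1/(2*(n:ℝ)))*CH + (1/(2*(n:ℝ)))*CD := by
    rw [Finset.sum_congr rfl (fun i _ => by rw [hHnext i])]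
    have e5 : ∀ i : Fin n, ((n:ℝ)/2) * ((1/(n:ℝ)) * (CH - breg (fs i) (fs' i) (φ i) xstar
          + breg (fs i) (fs' i) xt xstar))
        = (1/2) * (CH - breg (fs i) (fs' i) (φ i) xstar + breg (fs i) (fs' i) xt xstar) := by
      intro i
      field_simp
    rw [Finset.sum_congr rfl (fun i _ => e5 i), ← Finset.mul_sum]
    rw [Finset.sum_add_distrib, Finset.sum_sub_distrib, Finset.sum_const, card_univ,
      Fintype.card_fin, nsmul_eq_mul, ← hCH, ← hCD]
    field_simp
  -- final assembly
  rw [Finset.sum_add_distrib, mul_add, hpart2]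
  have e7 : ((n:ℝ)/2) * ((1/(n:ℝ)) * CH) = (1/2)*CH := by
    rw [← mul_assoc]
    congr 1
    field_simp
  rw [e7]
  set mm : ℝ := min (μ / (8 * L)) (1 / (2 * (n:ℝ))) with hmmdef
  clear_value mm
  have hmm1 : mm ≤ μ / (8*L) := by rw [hmmdef]; exact min_le_left _ _
  have hmm2 : mm ≤ 1 / (2*(n:ℝ)) := by rw [hmmdef]; exact min_le_right _ _
  have k1 : mm * ((1/η)*CA) ≤ μ*CA := by
    have hq1 : μ/(8*L) * ((1/η)*CA) = μ*CA := by
      rw [hηdef]; field_simp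
    have hq2 := mul_le_mul_of_nonneg_right hmm1
      (mul_nonneg (le_of_lt (by positivity : (0:ℝ) < 1/η)) hCA_nn)
    linarith
  have k2 : mm * ((1/2)*CH) ≤ (1/(4*(n:ℝ)))*CH := by
    have hq1 : 1/(2*(n:ℝ)) * ((1/2)*CH) = (1/(4*(n:ℝ)))*CH := by
      ring
    have hq2 := mul_le_mul_of_nonneg_right hmm2
      (mul_nonneg (show (0:ℝ) ≤ 1/2 by norm_num) hCH_nn)
    linarith
  have expand : (1 - mm) * ((1/η)*CA + (1/2)*CH)
      = (1/η)*CA + (1/2)*CH - mm*((1/η)*CA) - mm*((1/2)*CH) := by ring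
  have rCD : (1/(4*(n:ℝ)))*CD + (1/(2*(n:ℝ)))*CD - (1/(n:ℝ))*CD
      = -((1/(4*(n:ℝ)))*CD) := by field_simp; ring
  have rCH : (1/(4*(n:ℝ)))*CH - (1/(2*(n:ℝ)))*CH = -((1/(4*(n:ℝ)))*CH) := by
    field_simp; ring
  have kCD : 0 ≤ (1/(4*(n:ℝ)))*CD := mul_nonneg (by positivity) hCD_nn
  have hsplit14 : (1/(4*(n:ℝ)))*(CD + CH) = (1/(4*(n:ℝ)))*CD + (1/(4*(n:ℝ)))*CH := by ring
  rw [hsplit14] at hpart1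
  linarith [hpart1, k1, k2, expand, rCD, rCH, kCD]
end
end
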